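/- In each of the following four cases (components of w in the order (a₁₂, a₁₃, a₂₃, b₁, b₂, b₃)): (i) (k₁,k₂,k₃) = (2,2,k₃) with k₃ ∉ {1,3} and w = (x⁻¹, 0, 0, 0, 0, (k₃/2)·x⁻²); (ii) (k₁,k₂,k₃) = (k,k,3−k) with k ≠ 2 and w = (0, 0, 0, −x⁻¹, x⁻², 0); (iii) (k₁,k₂,k₃) = (k,k,5−k) with k ≠ 2 and w = (0, x⁻², x⁻¹, (k/3)·x⁻², −(2k/3)·x⁻³, 0); (iv) (k₁,k₂,k₃) = (1,1,0) and w = (0, 0, 0, 0, 0, x⁻¹); one has: E′(w) ∈ B, F′(w) ∈ B, w ∉ B, and every z ∈ V with E′(z) ∈ B and F′(z) ∈ B satisfies z ∈ ℂ·w + B. In other words, in each case the 𝔰′-invariant part of H¹(ℂℙ¹, T₂) is one-dimensional, spanned by the class of w. -/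

import Mathlib

noncomputable section

open LaurentPolynomial

/-- `L = ℂ[x, x⁻¹]`, the Laurent polynomials over `ℂ`. -/
abbrev L : Type := LaurentPolynomial ℂ

/-- The coefficient of `x^n` in a Laurent polynomial. -/
def coeffL (p : L) (n : ℤ) : ℂ := (AddMonoidAlgebra.coeff p : ℤ →₀ ℂ) n

lemma coeffL_zero (n : ℤ) : coeffL 0 n = 0 := rfl

lemma coeffL_add (a b : L) (n : ℤ) : coeffL (a + b) n = coeffL a n + coeffL b n := by
  unfold coeffL; erw [Finsupp.add_apply]; rfl

lemma coeffL_smul (c : ℂ) (a : L) (n : ℤ) : coeffL (c • a) n = c * coeffL a n := by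
  unfold coeffL; erw [Finsupp.smul_apply]; rfl

/-- `L₊`: Laurent polynomials involving only nonnegative powers of `x`. -/
def Lplus : Submodule ℂ L where
  carrier := {p | ∀ n : ℤ, n < 0 → coeffL p n = 0}
  zero_mem' := fun n _ => coeffL_zero n
  add_mem' := by intro a b ha hb n hn; rw [coeffL_add, ha n hn, hb n hn, add_zero]
  smul_mem' := by intro c p hp n hn; rw [coeffL_smul, hp n hn, mul_zero]

/-- `L₋`: Laurent polynomials involving only nonpositive powers of `x`. -/
def Lminus : Submodule ℂ L where
  carrier := {p | ∀ n : ℤ, 0 < n → coeffL p n = 0}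
  zero_mem' := fun n _ => coeffL_zero n
  add_mem' := by intro a b ha hb n hn; rw [coeffL_add, ha n hn, hb n hn, add_zero]
  smul_mem' := by intro c p hp n hn; rw [coeffL_smul, hp n hn, mul_zero]

/-- The derivative `d/dx` on Laurent polynomials. -/
def D (p : L) : L := Finsupp.sum (AddMonoidAlgebra.coeff p : ℤ →₀ ℂ) fun n a => ((n : ℂ) * a) • T (n - 1)

/-- `V = L⁶`, the model of Čech 1-cochains with values in `T₂`: a tuple
`v = (a₁₂, a₁₃, a₂₃, b₁, b₂, b₃)` (components `v 0, …, v 5`) encodes the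
vector field `Σ_{i<j} a_{ij}(x)ξᵢξⱼ∂/∂x + Σ_t b_t(x)ξ₁ξ₂ξ₃∂/∂ξ_t` on `U₀ ∩ U₁`. -/
abbrev V : Type := Fin 6 → L

/-- `B₀ = (L₊)⁶`: cochains holomorphic in `U₀`. -/
def B0 : Submodule ℂ V := Submodule.pi Set.univ fun _ => Lplus

/-- The linear map `v ↦ x^m · (v i)`. -/
def cndA (m : ℤ) (i : Fin 6) : V →ₗ[ℂ] L :=
  (LinearMap.mulLeft ℂ (T m)).comp (LinearMap.proj i)

/-- The linear map `v ↦ x^m · (v i − c·x⁻¹·(v j))`. -/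
def cndB (m : ℤ) (c : ℂ) (i j : Fin 6) : V →ₗ[ℂ] L :=
  (LinearMap.mulLeft ℂ (T m)).comp
    (LinearMap.proj i - c • (LinearMap.mulLeft ℂ (T (-1))).comp (LinearMap.proj j))

/-- `B₁`: cochains holomorphic in `U₁`, i.e. `v` with
`x^(kᵢ+kⱼ−2)·a_{ij} ∈ L₋` for all `i < j` and
`x^(d−k_t)·(b_t − σ_t·k_t·x⁻¹·a_{(t)}) ∈ L₋` for `t = 1, 2, 3`
(σ₁ = 1, σ₂ = −1, σ₃ = 1, a₍₁₎ = a₂₃, a₍₂₎ = a₁₃, a₍₃₎ = a₁₂, d = k₁+k₂+k₃). -/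
def B1 (k1 k2 k3 : ℤ) : Submodule ℂ V :=
  Lminus.comap (cndA (k1 + k2 - 2) 0) ⊓
  Lminus.comap (cndA (k1 + k3 - 2) 1) ⊓
  Lminus.comap (cndA (k2 + k3 - 2) 2) ⊓
  Lminus.comap (cndB (k2 + k3) ((k1 : ℂ)) 3 2) ⊓
  Lminus.comap (cndB (k1 + k3) (-(k2 : ℂ)) 4 1) ⊓
  Lminus.comap (cndB (k1 + k2) ((k3 : ℂ)) 5 0)

/-- The coboundary subspace `B = B₀ + B₁`. -/
def B (k1 k2 k3 : ℤ) : Submodule ℂ V := B0 ⊔ B1 k1 k2 k3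

/-- Action of `e = ∂/∂x` on cocycles: the componentwise derivative. -/
def Eop : V → V := fun v i => D (v i)

/-- Action of `f = ∂/∂y` on cocycles, with components
`a_{ij} ↦ (2 − kᵢ − kⱼ)·x·a_{ij} − x²·a_{ij}′` and
`b_t ↦ σ_t·k_t·a₍ₜ₎ − (d − k_t)·x·b_t − x²·b_t′`. -/
def Fop (k1 k2 k3 : ℤ) : V → V := fun v =>
  ![((2 - k1 - k2 : ℤ) : ℂ) • (T 1 * v 0) - T 2 * D (v 0),
    ((2 - k1 - k3 : ℤ) : ℂ) • (T 1 * v 1) - T 2 * D (v 1),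
    ((2 - k2 - k3 : ℤ) : ℂ) • (T 1 * v 2) - T 2 * D (v 2),
    (k1 : ℂ) • v 2 - ((k2 + k3 : ℤ) : ℂ) • (T 1 * v 3) - T 2 * D (v 3),
    -((k2 : ℂ) • v 1) - ((k1 + k3 : ℤ) : ℂ) • (T 1 * v 4) - T 2 * D (v 4),
    (k3 : ℂ) • v 0 - ((k1 + k2 : ℤ) : ℂ) • (T 1 * v 5) - T 2 * D (v 5)]

/-- `N(v) = (0, 0, a₁₃, −b₂, 0, 0)`; `e′ = ∂/∂x + ξ₂∂/∂ξ₁` acts by `E′ = E + N`. -/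
def Nop : V → V := fun v => ![0, 0, v 1, -v 4, 0, 0]

/-- `M(v) = (0, a₂₃, 0, 0, −b₁, 0)`; `f′ = ∂/∂y + η₁∂/∂η₂` acts by `F′ = F + M`. -/
def Mop : V → V := fun v => ![0, v 2, 0, 0, -v 3, 0]

/-- The action `E′ = E + N` of `e′ = ∂/∂x + ξ₂∂/∂ξ₁`. -/
def E'op : V → V := fun v => Eop v + Nop v

/-- The action `F′ = F + M` of `f′ = ∂/∂y + η₁∂/∂η₂`. -/
def F'op (k1 k2 k3 : ℤ) : V → V := fun v => Fop k1 k2 k3 v + Mop v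

/-- `N″(v) = (0, a₁₂, a₁₃, −b₂, −b₃, 0)`;
`e″ = ∂/∂x + ξ₂∂/∂ξ₁ + ξ₃∂/∂ξ₂` acts by `E″ = E + N″`. -/
def N''op : V → V := fun v => ![0, v 0, v 1, -v 4, -v 5, 0]

/-- `M″(v) = (2a₁₃, 2a₂₃, 0, 0, −2b₁, −2b₂)`;
`f″ = ∂/∂y + 2η₁∂/∂η₂ + 2η₂∂/∂η₃` acts by `F″ = F + M″`. -/
def M''op : V → V := fun v => ![(2 : ℂ) • v 1, (2 : ℂ) • v 2, 0, 0, -((2 : ℂ) • v 3), -((2 : ℂ) • v 4)]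

/-- The action `E″ = E + N″` of `e″`. -/
def E''op : V → V := fun v => Eop v + N''op v

/-- The action `F″ = F + M″` of `f″`. -/
def F''op (k1 k2 k3 : ℤ) : V → V := fun v => Fop k1 k2 k3 v + M''op v

/-- "The 𝔰′-invariant part of `H¹(ℂℙ¹, T₂)` (for degrees `(k₁, k₂, k₃)`) is
one-dimensional, spanned by the class of `w`." -/
def OneDimInv (k1 k2 k3 : ℤ) (w : V) : Prop :=
  E'op w ∈ B k1 k2 k3 ∧ F'op k1 k2 k3 w ∈ B k1 k2 k3 ∧ w ∉ B k1 k2 k3 ∧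
  ∀ z : V, E'op z ∈ B k1 k2 k3 → F'op k1 k2 k3 z ∈ B k1 k2 k3 →
    ∃ c : ℂ, z - c • w ∈ B k1 k2 k3


-- ============ auxiliary lemmas ============

lemma coeffL_T (m n : ℤ) : coeffL (T m) n = if n = m then 1 else 0 := by
  unfold coeffL
  show (Finsupp.single m (1:ℂ)) n = _
  exact Finsupp.single_apply.trans (by simp [eq_comm])

lemma coeffL_T_mul (m : ℤ) (p : L) (n : ℤ) : coeffL (T m * p) n = coeffL p (n - m) := by
  unfold coeffL
  rw [show (T m : L) = AddMonoidAlgebra.single m 1 from rfl]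
  erw [AddMonoidAlgebra.coeff_single_mul_apply]
  rw [one_mul]; ring_nf

lemma coeffL_neg (a : L) (n : ℤ) : coeffL (-a) n = -coeffL a n := by
  unfold coeffL; erw [Finsupp.neg_apply]; rfl

lemma coeffL_sub (a b : L) (n : ℤ) : coeffL (a - b) n = coeffL a n - coeffL b n := by
  unfold coeffL; erw [Finsupp.sub_apply]; rfl

lemma coeffL_D (p : L) (n : ℤ) : coeffL (D p) n = ((n+1 : ℤ) : ℂ) * coeffL p (n+1) := by
  unfold D coeffL
  rw [AddMonoidAlgebra.coeff_finsuppSum, Finsupp.sum_apply]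
  have key : ∀ (m : ℤ) (a : ℂ), (AddMonoidAlgebra.coeff (((m : ℂ) * a) • T (m - 1) : L) : ℤ →₀ ℂ) n
      = if m = n + 1 then ((m : ℂ) * a) else 0 := by
    intro m a
    show ((m : ℂ) * a) • (AddMonoidAlgebra.coeff (T (m-1) : L) : ℤ →₀ ℂ) n = _
    rw [show (AddMonoidAlgebra.coeff (T (m-1) : L) : ℤ →₀ ℂ) n = if m = n+1 then 1 else 0 by
      exact Finsupp.single_apply.trans (by
        congr 1; simp only [eq_iff_iff]; omega)]
    split <;> simp
  rw [show (Finsupp.sum (AddMonoidAlgebra.coeff p : ℤ →₀ ℂ) fun a₁ b => (AddMonoidAlgebra.coeff ((↑a₁ * b) • T (a₁ - 1) : L) : ℤ →₀ ℂ) n)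
      = Finsupp.sum (AddMonoidAlgebra.coeff p : ℤ →₀ ℂ) (fun m a => if m = n + 1 then ((m : ℂ) * a) else 0) from
    Finsupp.sum_congr (fun m _ => key m ((AddMonoidAlgebra.coeff p : ℤ →₀ ℂ) m))]
  rw [Finsupp.sum_ite_eq' (AddMonoidAlgebra.coeff p : ℤ →₀ ℂ) (n+1) (fun m a => (m : ℂ) * a)]
  split
  · push_cast; ring
  · rename_i h
    rw [Finsupp.notMem_support_iff.mp h]; ring

def npart (p : L) : L := AddMonoidAlgebra.ofCoeff ((AddMonoidAlgebra.coeff p : ℤ →₀ ℂ).filter (fun n => n < 0))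

lemma coeffL_npart (p : L) (n : ℤ) :
    coeffL (npart p) n = if n < 0 then coeffL p n else 0 := by
  unfold npart coeffL
  erw [Finsupp.filter_apply]

lemma mem_Lminus_iff {p : L} : p ∈ Lminus ↔ ∀ n : ℤ, 0 < n → coeffL p n = 0 := Iff.rfl

lemma mem_B0_iff {v : V} : v ∈ B0 ↔ ∀ (i : Fin 6) (n : ℤ), n < 0 → coeffL (v i) n = 0 := by
  constructor
  · intro h i n hn; exact (Submodule.mem_pi.mp h i trivial) n hn
  · intro h; exact Submodule.mem_pi.mpr fun i _ => h i

lemma cndA_mem (m : ℤ) (i : Fin 6) (v : V) :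
    cndA m i v ∈ Lminus ↔ ∀ n : ℤ, 1 - m ≤ n → coeffL (v i) n = 0 := by
  rw [mem_Lminus_iff]
  constructor
  · intro h n hn
    have := h (n + m) (by omega)
    rwa [show cndA m i v = T m * v i from rfl, coeffL_T_mul, add_sub_cancel_right] at this
  · intro h n hn
    rw [show cndA m i v = T m * v i from rfl, coeffL_T_mul]
    exact h _ (by omega)

lemma cndB_mem (m : ℤ) (c : ℂ) (i j : Fin 6) (v : V) :
    cndB m c i j v ∈ Lminus ↔ ∀ n : ℤ, 1 - m ≤ n → coeffL (v i) n = c * coeffL (v j) (n+1) := by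
  have key : ∀ n : ℤ, coeffL (cndB m c i j v) n
      = coeffL (v i) (n - m) - c * coeffL (v j) (n - m + 1) := by
    intro n
    rw [show cndB m c i j v = T m * (v i - c • (T (-1) * v j)) from rfl,
      coeffL_T_mul, coeffL_sub, coeffL_smul, coeffL_T_mul]
    congr 3
  rw [mem_Lminus_iff]
  constructor
  · intro h n hn
    have := h (n + m) (by omega)
    rw [key, add_sub_cancel_right] at this
    exact sub_eq_zero.mp this
  · intro h n hn
    rw [key]
    rw [h (n - m) (by omega)]
    ring

lemma mem_B1_iff (k1 k2 k3 : ℤ) (v : V) : v ∈ B1 k1 k2 k3 ↔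
    (∀ n : ℤ, 3 - (k1+k2) ≤ n → coeffL (v 0) n = 0) ∧
    (∀ n : ℤ, 3 - (k1+k3) ≤ n → coeffL (v 1) n = 0) ∧
    (∀ n : ℤ, 3 - (k2+k3) ≤ n → coeffL (v 2) n = 0) ∧
    (∀ n : ℤ, 1 - (k2+k3) ≤ n → coeffL (v 3) n = (k1:ℂ) * coeffL (v 2) (n+1)) ∧
    (∀ n : ℤ, 1 - (k1+k3) ≤ n → coeffL (v 4) n = -(k2:ℂ) * coeffL (v 1) (n+1)) ∧
    (∀ n : ℤ, 1 - (k1+k2) ≤ n → coeffL (v 5) n = (k3:ℂ) * coeffL (v 0) (n+1)) := by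
  simp only [B1, Submodule.mem_inf, Submodule.mem_comap]
  rw [cndA_mem, cndA_mem, cndA_mem, cndB_mem, cndB_mem, cndB_mem]
  constructor
  · rintro ⟨⟨⟨⟨⟨h1, h2⟩, h3⟩, h4⟩, h5⟩, h6⟩
    exact ⟨fun n hn => h1 n (by omega), fun n hn => h2 n (by omega),
      fun n hn => h3 n (by omega), fun n hn => h4 n (by omega),
      fun n hn => h5 n (by omega), fun n hn => h6 n (by omega)⟩
  · rintro ⟨h1, h2, h3, h4, h5, h6⟩
    exact ⟨⟨⟨⟨⟨fun n hn => h1 n (by omega), fun n hn => h2 n (by omega)⟩,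
      fun n hn => h3 n (by omega)⟩, fun n hn => h4 n (by omega)⟩,
      fun n hn => h5 n (by omega)⟩, fun n hn => h6 n (by omega)⟩

/-- Explicit coefficient-wise characterization of membership in `B`. -/
def Cond (k1 k2 k3 : ℤ) (v : V) : Prop :=
  (∀ n : ℤ, 3 - (k1+k2) ≤ n → n < 0 → coeffL (v 0) n = 0) ∧
  (∀ n : ℤ, 3 - (k1+k3) ≤ n → n < 0 → coeffL (v 1) n = 0) ∧
  (∀ n : ℤ, 3 - (k2+k3) ≤ n → n < 0 → coeffL (v 2) n = 0) ∧
  (∀ n : ℤ, 1 - (k2+k3) ≤ n → n < -1 → coeffL (v 3) n = (k1:ℂ) * coeffL (v 2) (n+1)) ∧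
  ((3 ≤ k2+k3 ∨ (k2+k3 = 2 ∧ k1 = 0)) → coeffL (v 3) (-1) = 0) ∧
  (∀ n : ℤ, 1 - (k1+k3) ≤ n → n < -1 → coeffL (v 4) n = -(k2:ℂ) * coeffL (v 1) (n+1)) ∧
  ((3 ≤ k1+k3 ∨ (k1+k3 = 2 ∧ k2 = 0)) → coeffL (v 4) (-1) = 0) ∧
  (∀ n : ℤ, 1 - (k1+k2) ≤ n → n < -1 → coeffL (v 5) n = (k3:ℂ) * coeffL (v 0) (n+1)) ∧
  ((3 ≤ k1+k2 ∨ (k1+k2 = 2 ∧ k3 = 0)) → coeffL (v 5) (-1) = 0)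

lemma mem_B_iff {k1 k2 k3 : ℤ} {v : V} : v ∈ B k1 k2 k3 ↔ Cond k1 k2 k3 v := by
  constructor
  · intro h
    rw [B, Submodule.mem_sup] at h
    obtain ⟨p, hp, u, hu, hpu⟩ := h
    rw [mem_B1_iff] at hu
    obtain ⟨hu1, hu2, hu3, hu4, hu5, hu6⟩ := hu
    rw [mem_B0_iff] at hp
    have hv : ∀ (i : Fin 6) (n : ℤ), n < 0 → coeffL (v i) n = coeffL (u i) n := by
      intro i n hn
      have hvi : v i = p i + u i := by rw [← hpu]; rfl
      rw [hvi, coeffL_add, hp i n hn, zero_add]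
    refine ⟨?_, ?_, ?_, ?_, ?_, ?_, ?_, ?_, ?_⟩
    · intro n h1 h2; rw [hv 0 n h2]; exact hu1 n (by omega)
    · intro n h1 h2; rw [hv 1 n h2]; exact hu2 n (by omega)
    · intro n h1 h2; rw [hv 2 n h2]; exact hu3 n (by omega)
    · intro n h1 h2
      rw [hv 3 n (by omega), hv 2 (n+1) (by omega)]
      exact hu4 n (by omega)
    · intro hant
      have hK : 2 ≤ k2 + k3 := by rcases hant with h | ⟨h, _⟩ <;> omega
      rw [hv 3 (-1) (by norm_num), hu4 (-1) (by omega)]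
      rcases hant with h3 | ⟨h2, h0⟩
      · rw [show (-1 : ℤ) + 1 = 0 from rfl, hu3 0 (by omega), mul_zero]
      · rw [h0]; norm_num
    · intro n h1 h2
      rw [hv 4 n (by omega), hv 1 (n+1) (by omega)]
      exact hu5 n (by omega)
    · intro hant
      have hK : 2 ≤ k1 + k3 := by rcases hant with h | ⟨h, _⟩ <;> omega
      rw [hv 4 (-1) (by norm_num), hu5 (-1) (by omega)]
      rcases hant with h3 | ⟨h2, h0⟩
      · rw [show (-1 : ℤ) + 1 = 0 from rfl, hu2 0 (by omega), mul_zero]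
      · rw [h0]; norm_num
    · intro n h1 h2
      rw [hv 5 n (by omega), hv 0 (n+1) (by omega)]
      exact hu6 n (by omega)
    · intro hant
      have hK : 2 ≤ k1 + k2 := by rcases hant with h | ⟨h, _⟩ <;> omega
      rw [hv 5 (-1) (by norm_num), hu6 (-1) (by omega)]
      rcases hant with h3 | ⟨h2, h0⟩
      · rw [show (-1 : ℤ) + 1 = 0 from rfl, hu1 0 (by omega), mul_zero]
      · rw [h0]; norm_num
  · rintro ⟨hc1, hc2, hc3, hc4, hc5, hc6, hc7, hc8, hc9⟩
    -- construct the correction constants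
    have hg1 : ∃ g : ℂ, ((3 ≤ k2+k3 ∨ k1 = 0) → g = 0) ∧
        (2 ≤ k2+k3 → coeffL (v 3) (-1) = (k1:ℂ) * g) := by
      by_cases hc : 3 ≤ k2+k3 ∨ k1 = 0
      · refine ⟨0, fun _ => rfl, fun h2 => ?_⟩
        rw [mul_zero]
        apply hc5
        rcases hc with h | h
        · exact Or.inl h
        · rcases lt_or_ge (k2+k3) 3 with h' | h'
          · exact Or.inr ⟨by omega, h⟩
          · exact Or.inl h'
      · push_neg at hc
        refine ⟨coeffL (v 3) (-1) / (k1:ℂ), fun h => absurd h (not_or.mpr ⟨by omega, hc.2⟩), fun _ => ?_⟩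
        have : (k1:ℂ) ≠ 0 := Int.cast_ne_zero.mpr hc.2
        field_simp
    have hg2 : ∃ g : ℂ, ((3 ≤ k1+k3 ∨ k2 = 0) → g = 0) ∧
        (2 ≤ k1+k3 → coeffL (v 4) (-1) = -(k2:ℂ) * g) := by
      by_cases hc : 3 ≤ k1+k3 ∨ k2 = 0
      · refine ⟨0, fun _ => rfl, fun h2 => ?_⟩
        rw [mul_zero]
        apply hc7
        rcases hc with h | h
        · exact Or.inl h
        · rcases lt_or_ge (k1+k3) 3 with h' | h'
          · exact Or.inr ⟨by omega, h⟩
          · exact Or.inl h'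
      · push_neg at hc
        refine ⟨coeffL (v 4) (-1) / (-(k2:ℂ)), fun h => absurd h (not_or.mpr ⟨by omega, hc.2⟩), fun _ => ?_⟩
        have : (k2:ℂ) ≠ 0 := Int.cast_ne_zero.mpr hc.2
        field_simp
    have hg3 : ∃ g : ℂ, ((3 ≤ k1+k2 ∨ k3 = 0) → g = 0) ∧
        (2 ≤ k1+k2 → coeffL (v 5) (-1) = (k3:ℂ) * g) := by
      by_cases hc : 3 ≤ k1+k2 ∨ k3 = 0
      · refine ⟨0, fun _ => rfl, fun h2 => ?_⟩
        rw [mul_zero]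
        apply hc9
        rcases hc with h | h
        · exact Or.inl h
        · rcases lt_or_ge (k1+k2) 3 with h' | h'
          · exact Or.inr ⟨by omega, h⟩
          · exact Or.inl h'
      · push_neg at hc
        refine ⟨coeffL (v 5) (-1) / (k3:ℂ), fun h => absurd h (not_or.mpr ⟨by omega, hc.2⟩), fun _ => ?_⟩
        have : (k3:ℂ) ≠ 0 := Int.cast_ne_zero.mpr hc.2
        field_simp
    obtain ⟨g1, hg1a, hg1b⟩ := hg1
    obtain ⟨g2, hg2a, hg2b⟩ := hg2
    obtain ⟨g3, hg3a, hg3b⟩ := hg3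
    classical
    set gf : Fin 6 → ℂ := fun i => if i = 0 then g3 else if i = 1 then g2 else if i = 2 then g1 else 0 with hgf
    set u : V := fun i => npart (v i) + gf i • T 0 with hu_def
    have huc : ∀ (i : Fin 6) (n : ℤ), coeffL (u i) n
        = (if n < 0 then coeffL (v i) n else 0) + (if n = 0 then gf i else 0) := by
      intro i n
      rw [hu_def]
      rw [coeffL_add, coeffL_npart, coeffL_smul, coeffL_T]
      congr 1
      split <;> ring
    have hgf0 : gf 0 = g3 := rfl
    have hgf1 : gf 1 = g2 := rfl
    have hgf2 : gf 2 = g1 := rfl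
    have hgf3 : gf 3 = 0 := rfl
    have hgf4 : gf 4 = 0 := rfl
    have hgf5 : gf 5 = 0 := rfl
    rw [B, Submodule.mem_sup]
    refine ⟨v - u, ?_, u, ?_, sub_add_cancel v u⟩
    · rw [mem_B0_iff]
      intro i n hn
      rw [show (v - u) i = v i - u i from rfl, coeffL_sub, huc i n,
        if_pos hn, if_neg (by omega)]
      ring
    · rw [mem_B1_iff]
      refine ⟨?_, ?_, ?_, ?_, ?_, ?_⟩
      · intro n hn
        rw [huc 0 n, hgf0]
        rcases lt_trichotomy n 0 with h | h | h
        · rw [if_pos h, if_neg (by omega), hc1 n (by omega) h, add_zero]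
        · rw [if_neg (by omega), if_pos h, zero_add]
          exact hg3a (Or.inl (by omega))
        · rw [if_neg (by omega), if_neg (by omega), add_zero]
      · intro n hn
        rw [huc 1 n, hgf1]
        rcases lt_trichotomy n 0 with h | h | h
        · rw [if_pos h, if_neg (by omega), hc2 n (by omega) h, add_zero]
        · rw [if_neg (by omega), if_pos h, zero_add]
          exact hg2a (Or.inl (by omega))
        · rw [if_neg (by omega), if_neg (by omega), add_zero]
      · intro n hn
        rw [huc 2 n, hgf2]
        rcases lt_trichotomy n 0 with h | h | h
        · rw [if_pos h, if_neg (by omega), hc3 n (by omega) h, add_zero]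
        · rw [if_neg (by omega), if_pos h, zero_add]
          exact hg1a (Or.inl (by omega))
        · rw [if_neg (by omega), if_neg (by omega), add_zero]
      · intro n hn
        rw [huc 3 n, huc 2 (n+1), hgf3, hgf2]
        rcases lt_trichotomy n (-1) with h | h | h
        · have e1 : coeffL (v 3) n = (k1:ℂ) * coeffL (v 2) (n+1) := hc4 n hn h
          split_ifs <;> first | (exfalso; omega) | (rw [e1]; ring) | ring
        · subst h
          have e1 := hg1b (by omega)
          split_ifs <;> first | (exfalso; omega) | (rw [e1]; ring) | ring
        · split_ifs <;> first | (exfalso; omega) | ring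
      · intro n hn
        rw [huc 4 n, huc 1 (n+1), hgf4, hgf1]
        rcases lt_trichotomy n (-1) with h | h | h
        · have e1 : coeffL (v 4) n = -(k2:ℂ) * coeffL (v 1) (n+1) := hc6 n hn h
          split_ifs <;> first | (exfalso; omega) | (rw [e1]; ring) | ring
        · subst h
          have e1 := hg2b (by omega)
          split_ifs <;> first | (exfalso; omega) | (rw [e1]; ring) | ring
        · split_ifs <;> first | (exfalso; omega) | ring
      · intro n hn
        rw [huc 5 n, huc 0 (n+1), hgf5, hgf0]
        rcases lt_trichotomy n (-1) with h | h | h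
        · have e1 : coeffL (v 5) n = (k3:ℂ) * coeffL (v 0) (n+1) := hc8 n hn h
          split_ifs <;> first | (exfalso; omega) | (rw [e1]; ring) | ring
        · subst h
          have e1 := hg3b (by omega)
          split_ifs <;> first | (exfalso; omega) | (rw [e1]; ring) | ring
        · split_ifs <;> first | (exfalso; omega) | ring

-- ====== coefficient formulas for E' and F' ======

lemma cE0 (z : V) (n : ℤ) :
    coeffL (E'op z 0) n = ((n+1 : ℤ) : ℂ) * coeffL (z 0) (n+1) := by
  show coeffL (D (z 0) + 0) n = _
  rw [coeffL_add, coeffL_zero, add_zero, coeffL_D]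

lemma cE1 (z : V) (n : ℤ) :
    coeffL (E'op z 1) n = ((n+1 : ℤ) : ℂ) * coeffL (z 1) (n+1) := by
  show coeffL (D (z 1) + 0) n = _
  rw [coeffL_add, coeffL_zero, add_zero, coeffL_D]

lemma cE2 (z : V) (n : ℤ) :
    coeffL (E'op z 2) n = ((n+1 : ℤ) : ℂ) * coeffL (z 2) (n+1) + coeffL (z 1) n := by
  show coeffL (D (z 2) + z 1) n = _
  rw [coeffL_add, coeffL_D]

lemma cE3 (z : V) (n : ℤ) :
    coeffL (E'op z 3) n = ((n+1 : ℤ) : ℂ) * coeffL (z 3) (n+1) - coeffL (z 4) n := by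
  show coeffL (D (z 3) + -(z 4)) n = _
  rw [coeffL_add, coeffL_neg, coeffL_D]
  ring

lemma cE4 (z : V) (n : ℤ) :
    coeffL (E'op z 4) n = ((n+1 : ℤ) : ℂ) * coeffL (z 4) (n+1) := by
  show coeffL (D (z 4) + 0) n = _
  rw [coeffL_add, coeffL_zero, add_zero, coeffL_D]

lemma cE5 (z : V) (n : ℤ) :
    coeffL (E'op z 5) n = ((n+1 : ℤ) : ℂ) * coeffL (z 5) (n+1) := by
  show coeffL (D (z 5) + 0) n = _
  rw [coeffL_add, coeffL_zero, add_zero, coeffL_D]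

lemma cF0 (k1 k2 k3 : ℤ) (z : V) (n : ℤ) :
    coeffL (F'op k1 k2 k3 z 0) n = ((3 - k1 - k2 - n : ℤ) : ℂ) * coeffL (z 0) (n-1) := by
  show coeffL ((((2 - k1 - k2 : ℤ) : ℂ) • (T 1 * z 0) - T 2 * D (z 0)) + 0) n = _
  rw [coeffL_add, coeffL_zero, add_zero, coeffL_sub, coeffL_smul, coeffL_T_mul,
    coeffL_T_mul, coeffL_D, show n - 2 + 1 = n - 1 by ring]
  push_cast
  ring

lemma cF1 (k1 k2 k3 : ℤ) (z : V) (n : ℤ) :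
    coeffL (F'op k1 k2 k3 z 1) n
      = ((3 - k1 - k3 - n : ℤ) : ℂ) * coeffL (z 1) (n-1) + coeffL (z 2) n := by
  show coeffL ((((2 - k1 - k3 : ℤ) : ℂ) • (T 1 * z 1) - T 2 * D (z 1)) + z 2) n = _
  rw [coeffL_add, coeffL_sub, coeffL_smul, coeffL_T_mul,
    coeffL_T_mul, coeffL_D, show n - 2 + 1 = n - 1 by ring]
  push_cast
  ring

lemma cF2 (k1 k2 k3 : ℤ) (z : V) (n : ℤ) :
    coeffL (F'op k1 k2 k3 z 2) n = ((3 - k2 - k3 - n : ℤ) : ℂ) * coeffL (z 2) (n-1) := by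
  show coeffL ((((2 - k2 - k3 : ℤ) : ℂ) • (T 1 * z 2) - T 2 * D (z 2)) + 0) n = _
  rw [coeffL_add, coeffL_zero, add_zero, coeffL_sub, coeffL_smul, coeffL_T_mul,
    coeffL_T_mul, coeffL_D, show n - 2 + 1 = n - 1 by ring]
  push_cast
  ring

lemma cF3 (k1 k2 k3 : ℤ) (z : V) (n : ℤ) :
    coeffL (F'op k1 k2 k3 z 3) n
      = (k1 : ℂ) * coeffL (z 2) n - ((k2 + k3 + n - 1 : ℤ) : ℂ) * coeffL (z 3) (n-1) := by
  show coeffL (((k1 : ℂ) • z 2 - ((k2 + k3 : ℤ) : ℂ) • (T 1 * z 3) - T 2 * D (z 3)) + 0) n = _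
  rw [coeffL_add, coeffL_zero, add_zero, coeffL_sub, coeffL_sub, coeffL_smul, coeffL_smul,
    coeffL_T_mul, coeffL_T_mul, coeffL_D, show n - 2 + 1 = n - 1 by ring]
  push_cast
  ring

lemma cF4 (k1 k2 k3 : ℤ) (z : V) (n : ℤ) :
    coeffL (F'op k1 k2 k3 z 4) n
      = -(k2 : ℂ) * coeffL (z 1) n - ((k1 + k3 + n - 1 : ℤ) : ℂ) * coeffL (z 4) (n-1)
        - coeffL (z 3) n := by
  show coeffL ((-((k2 : ℂ) • z 1) - ((k1 + k3 : ℤ) : ℂ) • (T 1 * z 4) - T 2 * D (z 4))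
      + -(z 3)) n = _
  rw [coeffL_add, coeffL_neg, coeffL_sub, coeffL_sub, coeffL_neg, coeffL_smul, coeffL_smul,
    coeffL_T_mul, coeffL_T_mul, coeffL_D, show n - 2 + 1 = n - 1 by ring]
  push_cast
  ring

lemma cF5 (k1 k2 k3 : ℤ) (z : V) (n : ℤ) :
    coeffL (F'op k1 k2 k3 z 5) n
      = (k3 : ℂ) * coeffL (z 0) n - ((k1 + k2 + n - 1 : ℤ) : ℂ) * coeffL (z 5) (n-1) := by
  show coeffL (((k3 : ℂ) • z 0 - ((k1 + k2 : ℤ) : ℂ) • (T 1 * z 5) - T 2 * D (z 5)) + 0) n = _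
  rw [coeffL_add, coeffL_zero, add_zero, coeffL_sub, coeffL_sub, coeffL_smul, coeffL_smul,
    coeffL_T_mul, coeffL_T_mul, coeffL_D, show n - 2 + 1 = n - 1 by ring]
  push_cast
  ring

-- helper for cancelling nonzero integer scalars
lemma int_mul_eq_zero {a : ℤ} (ha : a ≠ 0) {x : ℂ} (h : (a : ℂ) * x = 0) : x = 0 := by
  have : (a : ℂ) ≠ 0 := Int.cast_ne_zero.mpr ha
  exact (mul_eq_zero.mp h).resolve_left this

lemma block05 (k k3 : ℤ) (hk : k ≠ 2) (hk1 : k + k = 2 → k3 ≠ 0) (z : V)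
    (hE0 : ∀ n : ℤ, 3 - (k+k) ≤ n → n < 0 → coeffL (E'op z 0) n = 0)
    (hF0 : ∀ n : ℤ, 3 - (k+k) ≤ n → n < 0 → coeffL (F'op k k k3 z 0) n = 0)
    (hE7 : ∀ n : ℤ, 1 - (k+k) ≤ n → n < -1 →
      coeffL (E'op z 5) n = (k3:ℂ) * coeffL (E'op z 0) (n+1))
    (hF7 : ∀ n : ℤ, 1 - (k+k) ≤ n → n < -1 →
      coeffL (F'op k k k3 z 5) n = (k3:ℂ) * coeffL (F'op k k k3 z 0) (n+1)) :
    (∀ n : ℤ, 3 - (k+k) ≤ n → n < 0 → coeffL (z 0) n = 0) ∧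
    (∀ n : ℤ, 1 - (k+k) ≤ n → n < -1 → coeffL (z 5) n = (k3:ℂ) * coeffL (z 0) (n+1)) ∧
    ((3 ≤ k+k ∨ (k+k = 2 ∧ k3 = 0)) → coeffL (z 5) (-1) = 0) := by
  have h0 : ∀ n : ℤ, 3 - (k+k) ≤ n → n < 0 → coeffL (z 0) n = 0 := by
    intro n h1 h2
    by_cases hn2 : n ≤ -2
    · have h := hF0 (n+1) (by omega) (by omega)
      rw [cF0, show n+1-1 = n from by ring] at h
      exact int_mul_eq_zero (by omega) h
    · have hn1 : n = -1 := by omega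
      subst hn1
      have h := hE0 (-2) (by omega) (by norm_num)
      rw [cE0] at h
      have h' := int_mul_eq_zero (show (-2+1 : ℤ) ≠ 0 from by norm_num) h
      rwa [show (-2 : ℤ)+1 = -1 from by norm_num] at h'
  refine ⟨h0, ?_, ?_⟩
  · intro n h1 h2
    by_cases hn : 2 - (k+k) ≤ n
    · have h0' : coeffL (z 0) (n+1) = 0 := h0 (n+1) (by omega) (by omega)
      have h := hE7 (n-1) (by omega) (by omega)
      rw [cE5, cE0, show n-1+1 = n from by ring] at h
      rw [h0', mul_zero, mul_zero] at h
      rw [h0', mul_zero]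
      exact int_mul_eq_zero (by omega) h
    · have hn' : n = 1 - (k+k) := by omega
      have h := hF7 (n+1) (by omega) (by omega)
      rw [cF5, cF0, show n+1-1 = n from by ring] at h
      rw [show ((k + k + (n+1) - 1 : ℤ)) = 1 from by omega,
        show ((3 - k - k - (n+1+1) : ℤ)) = 0 from by omega] at h
      push_cast at h
      linear_combination -h
  · intro hant
    have h3 : 3 ≤ k + k := by
      rcases hant with h | ⟨h, h'⟩
      · exact h
      · exact absurd h' (hk1 h)
    have h := hE7 (-2) (by omega) (by norm_num)
    rw [cE5, cE0] at h
    rw [show (-2:ℤ)+1 = -1 from by norm_num] at h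
    rw [show (-1:ℤ)+1 = 0 from by norm_num] at h
    push_cast at h
    linear_combination -h

lemma coeff_sub_smul (z w : V) (c : ℂ) (i : Fin 6) (n : ℤ) :
    coeffL ((z - c • w) i) n = coeffL (z i) n - c * coeffL (w i) n := by
  rw [show (z - c • w) i = z i - c • w i from rfl, coeffL_sub, coeffL_smul]

lemma case4 : OneDimInv 1 1 0 ![0, 0, 0, 0, 0, T (-1)] := by
  have e0 : (![0, 0, 0, 0, 0, T (-1)] : V) 0 = 0 := rfl
  have e5 : (![0, 0, 0, 0, 0, T (-1)] : V) 5 = T (-1) := rfl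
  refine ⟨?_, ?_, ?_, ?_⟩
  · rw [mem_B_iff]
    refine ⟨fun n h1 h2 => absurd h1 (by omega), fun n h1 h2 => absurd h1 (by omega),
      fun n h1 h2 => absurd h1 (by omega), fun n h1 h2 => absurd h1 (by omega),
      fun h => absurd h (by omega), fun n h1 h2 => absurd h1 (by omega),
      fun h => absurd h (by omega), fun n h1 h2 => absurd h1 (by omega), ?_⟩
    intro _
    rw [cE5]
    norm_num
  · rw [mem_B_iff]
    refine ⟨fun n h1 h2 => absurd h1 (by omega), fun n h1 h2 => absurd h1 (by omega),
      fun n h1 h2 => absurd h1 (by omega), fun n h1 h2 => absurd h1 (by omega),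
      fun h => absurd h (by omega), fun n h1 h2 => absurd h1 (by omega),
      fun h => absurd h (by omega), fun n h1 h2 => absurd h1 (by omega), ?_⟩
    intro _
    rw [cF5, e0, e5, coeffL_zero, coeffL_T]
    norm_num
  · rw [mem_B_iff]
    intro hC
    have h := hC.2.2.2.2.2.2.2.2 (Or.inr ⟨by norm_num, rfl⟩)
    rw [e5, coeffL_T] at h
    norm_num at h
  · intro z hEz hFz
    refine ⟨coeffL (z 5) (-1), ?_⟩
    rw [mem_B_iff]
    refine ⟨fun n h1 h2 => absurd h1 (by omega), fun n h1 h2 => absurd h1 (by omega),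
      fun n h1 h2 => absurd h1 (by omega), fun n h1 h2 => absurd h1 (by omega),
      fun h => absurd h (by omega), fun n h1 h2 => absurd h1 (by omega),
      fun h => absurd h (by omega), fun n h1 h2 => absurd h1 (by omega), ?_⟩
    intro _
    rw [coeff_sub_smul, e5, coeffL_T]
    norm_num

lemma case2 (k : ℤ) (hk : k ≠ 2) :
    OneDimInv k k (3 - k) ![0, 0, 0, -T (-1), T (-2), 0] := by
  have e0 : (![0, 0, 0, -T (-1), T (-2), 0] : V) 0 = 0 := rfl
  have e1 : (![0, 0, 0, -T (-1), T (-2), 0] : V) 1 = 0 := rfl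
  have e2 : (![0, 0, 0, -T (-1), T (-2), 0] : V) 2 = 0 := rfl
  have e3 : (![0, 0, 0, -T (-1), T (-2), 0] : V) 3 = -T (-1) := rfl
  have e4 : (![0, 0, 0, -T (-1), T (-2), 0] : V) 4 = T (-2) := rfl
  have e5 : (![0, 0, 0, -T (-1), T (-2), 0] : V) 5 = 0 := rfl
  refine ⟨?_, ?_, ?_, ?_⟩
  · -- E'w ∈ B
    rw [mem_B_iff]
    refine ⟨?_, ?_, ?_, ?_, ?_, ?_, ?_, ?_, ?_⟩
    · intro n h1 h2; rw [cE0, e0, coeffL_zero, mul_zero]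
    · intro n h1 h2; exact absurd h1 (by omega)
    · intro n h1 h2; exact absurd h1 (by omega)
    · intro n h1 h2
      have hn : n = -2 := by omega
      subst hn
      rw [cE3, cE2, e1, e2, e3, e4]
      simp only [coeffL_neg, coeffL_T, coeffL_zero]
      norm_num
    · intro _
      rw [cE3, e3, e4]
      simp only [coeffL_neg, coeffL_T]
      norm_num
    · intro n h1 h2
      have hn : n = -2 := by omega
      subst hn
      rw [cE4, cE1, e1, e4]
      simp only [coeffL_T, coeffL_zero]
      norm_num
    · intro _
      rw [cE4, e4]
      simp only [coeffL_T]
      norm_num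
    · intro n h1 h2; rw [cE5, cE0, e0, e5, coeffL_zero, coeffL_zero]; ring
    · intro _; rw [cE5, e5, coeffL_zero, mul_zero]
  · -- F'w ∈ B
    rw [mem_B_iff]
    refine ⟨?_, ?_, ?_, ?_, ?_, ?_, ?_, ?_, ?_⟩
    · intro n h1 h2; rw [cF0, e0, coeffL_zero, mul_zero]
    · intro n h1 h2; exact absurd h1 (by omega)
    · intro n h1 h2; exact absurd h1 (by omega)
    · intro n h1 h2
      have hn : n = -2 := by omega
      subst hn
      rw [cF3, cF2, e2, e3]
      simp only [coeffL_neg, coeffL_T, coeffL_zero]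
      norm_num
    · intro _
      rw [cF3, e2, e3]
      simp only [coeffL_neg, coeffL_T, coeffL_zero]
      norm_num
    · intro n h1 h2
      have hn : n = -2 := by omega
      subst hn
      rw [cF4, cF1, e1, e2, e3, e4]
      simp only [coeffL_neg, coeffL_T, coeffL_zero]
      norm_num
    · intro _
      rw [cF4, e1, e3, e4]
      simp only [coeffL_neg, coeffL_T, coeffL_zero]
      rw [show (k + (3 - k) + (-1) - 1 : ℤ) = 1 from by ring]
      norm_num
    · intro n h1 h2
      rw [cF5, cF0, e0, e5]
      simp only [coeffL_zero]
      push_cast; ring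
    · intro _
      rw [cF5, e0, e5]
      simp only [coeffL_zero]
      push_cast; ring
  · -- w ∉ B
    rw [mem_B_iff]
    intro hC
    have h := hC.2.2.2.2.1 (Or.inl (by omega))
    rw [e3, coeffL_neg, coeffL_T] at h
    norm_num at h
  · -- the invariants are spanned by w mod B
    intro z hEz hFz
    rw [mem_B_iff] at hEz hFz
    obtain ⟨hE1, hE2, hE3', hE4, hE5, hE6, hE7, hE8, hE9⟩ := hEz
    obtain ⟨hF1, hF2, hF3', hF4, hF5, hF6, hF7, hF8, hF9⟩ := hFz
    obtain ⟨b0, b5, b5'⟩ := block05 k (3-k) hk (by intro h; omega) z hE1 hF1 hE8 hF8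
    -- derived coefficient facts
    have f1 : coeffL (z 4) (-1) = 0 := by
      have h := hE5 (Or.inl (by omega))
      rw [cE3, show (-1 : ℤ) + 1 = 0 from by norm_num] at h
      push_cast at h
      linear_combination -h
    have f2 : coeffL (z 3) (-2) = (k:ℂ) * coeffL (z 2) (-1) := by
      have h := hF5 (Or.inl (by omega))
      rw [cF3, show (k + (3 - k) + (-1) - 1 : ℤ) = 1 from by ring,
        show (-1 : ℤ) - 1 = -2 from by norm_num] at h
      push_cast at h
      linear_combination -h
    have f3 : coeffL (z 4) (-2) = -(k:ℂ) * coeffL (z 1) (-1) - coeffL (z 3) (-1) := by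
      have h := hF7 (Or.inl (by omega))
      rw [cF4, show (k + (3 - k) + (-1) - 1 : ℤ) = 1 from by ring,
        show (-1 : ℤ) - 1 = -2 from by norm_num] at h
      push_cast at h
      linear_combination -h
    refine ⟨-coeffL (z 3) (-1), ?_⟩
    rw [mem_B_iff]
    refine ⟨?_, ?_, ?_, ?_, ?_, ?_, ?_, ?_, ?_⟩
    · intro n h1 h2
      rw [coeff_sub_smul, e0, coeffL_zero, b0 n h1 h2]
      ring
    · intro n h1 h2; exact absurd h1 (by omega)
    · intro n h1 h2; exact absurd h1 (by omega)
    · intro n h1 h2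
      have hn : n = -2 := by omega
      subst hn
      rw [coeff_sub_smul, coeff_sub_smul, e3, e2]
      simp only [coeffL_neg, coeffL_T, coeffL_zero]
      norm_num
      linear_combination f2
    · intro _
      rw [coeff_sub_smul, e3]
      simp only [coeffL_neg, coeffL_T]
      norm_num
    · intro n h1 h2
      have hn : n = -2 := by omega
      subst hn
      rw [coeff_sub_smul, coeff_sub_smul, e4, e1]
      simp only [coeffL_T, coeffL_zero]
      norm_num
      linear_combination f3
    · intro _
      rw [coeff_sub_smul, e4]
      simp only [coeffL_T]
      norm_num
      exact f1
    · intro n h1 h2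
      rw [coeff_sub_smul, coeff_sub_smul, e5, e0, coeffL_zero, coeffL_zero]
      have := b5 n h1 h2
      push_cast at this ⊢
      linear_combination this
    · intro hant
      rw [coeff_sub_smul, e5, coeffL_zero]
      rw [b5' hant]
      ring

lemma case3 (k : ℤ) (hk : k ≠ 2) :
    OneDimInv k k (5 - k)
      ![0, T (-2), T (-1), ((k : ℂ) / 3) • T (-2), -((2 * (k : ℂ) / 3) • T (-3)), 0] := by
  set w : V := ![0, T (-2), T (-1), ((k : ℂ) / 3) • T (-2), -((2 * (k : ℂ) / 3) • T (-3)), 0]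
    with hw
  have e0 : w 0 = 0 := rfl
  have e1 : w 1 = T (-2) := rfl
  have e2 : w 2 = T (-1) := rfl
  have e3 : w 3 = ((k : ℂ) / 3) • T (-2) := rfl
  have e4 : w 4 = -((2 * (k : ℂ) / 3) • T (-3)) := rfl
  have e5 : w 5 = 0 := rfl
  refine ⟨?_, ?_, ?_, ?_⟩
  · -- E'w ∈ B
    rw [mem_B_iff]
    refine ⟨?_, ?_, ?_, ?_, ?_, ?_, ?_, ?_, ?_⟩
    · intro n h1 h2; rw [cE0, e0, coeffL_zero, mul_zero]
    · intro n h1 h2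
      have : n = -2 ∨ n = -1 := by omega
      rcases this with rfl | rfl <;>
        · rw [cE1, e1]
          simp only [coeffL_T]
          norm_num
    · intro n h1 h2
      have : n = -2 ∨ n = -1 := by omega
      rcases this with rfl | rfl <;>
        · rw [cE2, e1, e2]
          simp only [coeffL_T]
          norm_num
    · intro n h1 h2
      have : n = -4 ∨ n = -3 ∨ n = -2 := by omega
      rcases this with rfl | rfl | rfl <;>
        · rw [cE3, cE2, e1, e2, e3, e4]
          simp only [coeffL_smul, coeffL_neg, coeffL_T]
          norm_num <;> ring
    · intro _
      rw [cE3, e3, e4]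
      simp only [coeffL_smul, coeffL_neg, coeffL_T]
      norm_num
    · intro n h1 h2
      have : n = -4 ∨ n = -3 ∨ n = -2 := by omega
      rcases this with rfl | rfl | rfl <;>
        · rw [cE4, cE1, e1, e4]
          simp only [coeffL_smul, coeffL_neg, coeffL_T]
          norm_num <;> ring
    · intro _
      rw [cE4, e4]
      simp only [coeffL_smul, coeffL_neg, coeffL_T]
      norm_num
    · intro n h1 h2
      rw [cE5, cE0, e0, e5]
      simp only [coeffL_zero]
      push_cast; ring
    · intro _
      rw [cE5, e5, coeffL_zero, mul_zero]
  · -- F'w ∈ B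
    rw [mem_B_iff]
    refine ⟨?_, ?_, ?_, ?_, ?_, ?_, ?_, ?_, ?_⟩
    · intro n h1 h2; rw [cF0, e0, coeffL_zero, mul_zero]
    · intro n h1 h2
      have : n = -2 ∨ n = -1 := by omega
      rcases this with rfl | rfl <;>
        · rw [cF1, e1, e2]
          simp only [coeffL_T]
          push_cast
          norm_num <;> ring
    · intro n h1 h2
      have : n = -2 ∨ n = -1 := by omega
      rcases this with rfl | rfl <;>
        · rw [cF2, e2]
          simp only [coeffL_T]
          push_cast
          norm_num <;> ring
    · intro n h1 h2
      have : n = -4 ∨ n = -3 ∨ n = -2 := by omega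
      rcases this with rfl | rfl | rfl <;>
        · rw [cF3, cF2, e2, e3]
          simp only [coeffL_smul, coeffL_T]
          push_cast
          norm_num <;> ring
    · intro _
      rw [cF3, e2, e3]
      simp only [coeffL_smul, coeffL_T]
      push_cast
      norm_num <;> ring
    · intro n h1 h2
      have : n = -4 ∨ n = -3 ∨ n = -2 := by omega
      rcases this with rfl | rfl | rfl <;>
        · rw [cF4, cF1, e1, e2, e3, e4]
          simp only [coeffL_smul, coeffL_neg, coeffL_T]
          push_cast
          norm_num <;> ring
    · intro _
      rw [cF4, e1, e3, e4]
      simp only [coeffL_smul, coeffL_neg, coeffL_T]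
      push_cast
      norm_num <;> ring
    · intro n h1 h2
      rw [cF5, cF0, e0, e5]
      simp only [coeffL_zero]
      push_cast; ring
    · intro _
      rw [cF5, e0, e5]
      simp only [coeffL_zero]
      push_cast; ring
  · -- w ∉ B
    rw [mem_B_iff]
    intro hC
    have h := hC.2.1 (-2) (by omega) (by norm_num)
    rw [e1, coeffL_T] at h
    norm_num at h
  · -- invariants spanned by w
    intro z hEz hFz
    rw [mem_B_iff] at hEz hFz
    obtain ⟨hE1, hE2, hE3', hE4, hE5, hE6, hE7, hE8, hE9⟩ := hEz
    obtain ⟨hF1, hF2, hF3', hF4, hF5, hF6, hF7, hF8, hF9⟩ := hFz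
    obtain ⟨b0, b5, b5'⟩ := block05 k (5-k) hk (by intro h; omega) z hE1 hF1 hE8 hF8
    have f1 : coeffL (z 1) (-1) = 0 := by
      have h := hE2 (-2) (by omega) (by norm_num)
      rw [cE1, show (-2 : ℤ) + 1 = -1 from by norm_num] at h
      exact int_mul_eq_zero (by norm_num) h
    have f2 : coeffL (z 2) (-2) = 0 := by
      have h := hF3' (-1) (by omega) (by norm_num)
      rw [cF2, show (3 - k - (5 - k) - (-1) : ℤ) = -1 from by ring,
        show (-1 : ℤ) - 1 = -2 from by norm_num] at h
      exact int_mul_eq_zero (by norm_num) h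
    have f3 : coeffL (z 1) (-2) = coeffL (z 2) (-1) := by
      have h := hE3' (-2) (by omega) (by norm_num)
      rw [cE2, show (-2 : ℤ) + 1 = -1 from by norm_num] at h
      push_cast at h
      linear_combination h
    have f4 : coeffL (z 4) (-1) = 0 := by
      have h := hE5 (Or.inl (by omega))
      rw [cE3, show (-1 : ℤ) + 1 = 0 from by norm_num] at h
      push_cast at h
      linear_combination -h
    have f5 : coeffL (z 4) (-2) = 0 := by
      have h := hE6 (-3) (by omega) (by norm_num)
      rw [cE4, cE1, show (-3 : ℤ) + 1 = -2 from by norm_num,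
        show (-2 : ℤ) + 1 = -1 from by norm_num, f1] at h
      push_cast at h
      linear_combination -h/2
    have f6 : coeffL (z 4) (-3) = -(2 * (k:ℂ) / 3) * coeffL (z 2) (-1) := by
      have h := hE6 (-4) (by omega) (by norm_num)
      rw [cE4, cE1, show (-4 : ℤ) + 1 = -3 from by norm_num,
        show (-3 : ℤ) + 1 = -2 from by norm_num, f3] at h
      push_cast at h
      linear_combination -h/3
    have f7 : coeffL (z 3) (-1) = 0 := by
      have h := hE4 (-2) (by omega) (by norm_num)
      rw [cE3, cE2, show (-2 : ℤ) + 1 = -1 from by norm_num,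
        show (-1 : ℤ) + 1 = 0 from by norm_num, f1, f5] at h
      push_cast at h
      linear_combination -h
    have f8 : coeffL (z 3) (-2) = ((k:ℂ) / 3) * coeffL (z 2) (-1) := by
      have h := hF5 (Or.inl (by omega))
      rw [cF3, show (k + (5 - k) + (-1) - 1 : ℤ) = 3 from by ring,
        show (-1 : ℤ) - 1 = -2 from by norm_num] at h
      push_cast at h
      linear_combination -h/3
    have f9 : coeffL (z 3) (-3) = (k:ℂ) * coeffL (z 2) (-2) := by
      have h := hF4 (-2) (by omega) (by norm_num)
      rw [cF3, cF2, show (k + (5 - k) + (-2) - 1 : ℤ) = 2 from by ring,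
        show (-2 : ℤ) - 1 = -3 from by norm_num,
        show (-2 : ℤ) + 1 = -1 from by norm_num,
        show (3 - k - (5 - k) - (-1) : ℤ) = -1 from by ring] at h
      push_cast at h
      linear_combination -h/2
    have f10 : coeffL (z 3) (-4) = (k:ℂ) * coeffL (z 2) (-3) := by
      have h := hF4 (-3) (by omega) (by norm_num)
      rw [cF3, cF2, show (k + (5 - k) + (-3) - 1 : ℤ) = 1 from by ring,
        show (-3 : ℤ) - 1 = -4 from by norm_num,
        show (-3 : ℤ) + 1 = -2 from by norm_num,
        show (3 - k - (5 - k) - (-2) : ℤ) = 0 from by ring] at h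
      push_cast at h
      linear_combination -h
    have f11 : coeffL (z 4) (-4) = -(k:ℂ) * coeffL (z 1) (-3) := by
      have h := hF6 (-3) (by omega) (by norm_num)
      rw [cF4, cF1, show (k + (5 - k) + (-3) - 1 : ℤ) = 1 from by ring,
        show (-3 : ℤ) - 1 = -4 from by norm_num,
        show (-3 : ℤ) + 1 = -2 from by norm_num,
        show (3 - k - (5 - k) - (-2) : ℤ) = 0 from by ring, f9] at h
      push_cast at h
      linear_combination -h
    refine ⟨coeffL (z 2) (-1), ?_⟩
    rw [mem_B_iff]
    refine ⟨?_, ?_, ?_, ?_, ?_, ?_, ?_, ?_, ?_⟩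
    · intro n h1 h2
      rw [coeff_sub_smul, e0, coeffL_zero, b0 n h1 h2]
      ring
    · intro n h1 h2
      have : n = -2 ∨ n = -1 := by omega
      rcases this with rfl | rfl
      · rw [coeff_sub_smul, e1]
        simp only [coeffL_T]
        norm_num
        linear_combination f3
      · rw [coeff_sub_smul, e1]
        simp only [coeffL_T]
        norm_num
        exact f1
    · intro n h1 h2
      have : n = -2 ∨ n = -1 := by omega
      rcases this with rfl | rfl
      · rw [coeff_sub_smul, e2]
        simp only [coeffL_T]
        norm_num
        exact f2
      · rw [coeff_sub_smul, e2]
        simp only [coeffL_T]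
        norm_num
    · intro n h1 h2
      have : n = -4 ∨ n = -3 ∨ n = -2 := by omega
      rcases this with rfl | rfl | rfl
      · rw [coeff_sub_smul, coeff_sub_smul, e3, e2]
        simp only [coeffL_smul, coeffL_T]
        norm_num
        linear_combination f10
      · rw [coeff_sub_smul, coeff_sub_smul, e3, e2]
        simp only [coeffL_smul, coeffL_T]
        norm_num
        linear_combination f9
      · rw [coeff_sub_smul, coeff_sub_smul, e3, e2]
        simp only [coeffL_smul, coeffL_T]
        norm_num
        linear_combination f8
    · intro _
      rw [coeff_sub_smul, e3]
      simp only [coeffL_smul, coeffL_T]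
      norm_num
      exact f7
    · intro n h1 h2
      have : n = -4 ∨ n = -3 ∨ n = -2 := by omega
      rcases this with rfl | rfl | rfl
      · rw [coeff_sub_smul, coeff_sub_smul, e4, e1]
        simp only [coeffL_smul, coeffL_neg, coeffL_T]
        norm_num
        linear_combination f11
      · rw [coeff_sub_smul, coeff_sub_smul, e4, e1]
        simp only [coeffL_smul, coeffL_neg, coeffL_T]
        norm_num
        linear_combination f6 + (k:ℂ) * f3
      · rw [coeff_sub_smul, coeff_sub_smul, e4, e1]
        simp only [coeffL_smul, coeffL_neg, coeffL_T]
        norm_num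
        linear_combination f5 + (k:ℂ) * f1
    · intro _
      rw [coeff_sub_smul, e4]
      simp only [coeffL_smul, coeffL_neg, coeffL_T]
      norm_num
      exact f4
    · intro n h1 h2
      rw [coeff_sub_smul, coeff_sub_smul, e5, e0, coeffL_zero, coeffL_zero]
      have := b5 n h1 h2
      push_cast at this ⊢
      linear_combination this
    · intro hant
      rw [coeff_sub_smul, e5, coeffL_zero]
      rw [b5' hant]
      ring

lemma case1 (k3 : ℤ) (hk1 : k3 ≠ 1) (hk3 : k3 ≠ 3) :
    OneDimInv 2 2 k3 ![T (-1), 0, 0, 0, 0, ((k3 : ℂ) / 2) • T (-2)] := by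
  set w : V := ![T (-1), 0, 0, 0, 0, ((k3 : ℂ) / 2) • T (-2)] with hw
  have e0 : w 0 = T (-1) := rfl
  have e1 : w 1 = 0 := rfl
  have e2 : w 2 = 0 := rfl
  have e3 : w 3 = 0 := rfl
  have e4 : w 4 = 0 := rfl
  have e5 : w 5 = ((k3 : ℂ) / 2) • T (-2) := rfl
  refine ⟨?_, ?_, ?_, ?_⟩
  · -- E'w ∈ B
    rw [mem_B_iff]
    refine ⟨?_, ?_, ?_, ?_, ?_, ?_, ?_, ?_, ?_⟩
    · intro n h1 h2
      have hn : n = -1 := by omega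
      subst hn
      rw [cE0, e0]
      simp only [coeffL_T]
      norm_num
    · intro n h1 h2; rw [cE1, e1, coeffL_zero, mul_zero]
    · intro n h1 h2; rw [cE2, e1, e2, coeffL_zero, coeffL_zero]; ring
    · intro n h1 h2
      rw [cE3, cE2, e1, e2, e3, e4]
      simp only [coeffL_zero]
      ring
    · intro _; rw [cE3, e3, e4]; simp only [coeffL_zero]; ring
    · intro n h1 h2
      rw [cE4, cE1, e1, e4]
      simp only [coeffL_zero]
      ring
    · intro _; rw [cE4, e4, coeffL_zero, mul_zero]
    · intro n h1 h2
      have : n = -3 ∨ n = -2 := by omega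
      rcases this with rfl | rfl <;>
        · rw [cE5, cE0, e0, e5]
          simp only [coeffL_smul, coeffL_T]
          norm_num <;> ring
    · intro _
      rw [cE5, e5]
      simp only [coeffL_smul, coeffL_T]
      norm_num
  · -- F'w ∈ B
    rw [mem_B_iff]
    refine ⟨?_, ?_, ?_, ?_, ?_, ?_, ?_, ?_, ?_⟩
    · intro n h1 h2
      have hn : n = -1 := by omega
      subst hn
      rw [cF0, e0]
      simp only [coeffL_T]
      norm_num
    · intro n h1 h2; rw [cF1, e1, e2, coeffL_zero, coeffL_zero]; ring
    · intro n h1 h2; rw [cF2, e2, coeffL_zero, mul_zero]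
    · intro n h1 h2
      rw [cF3, cF2, e2, e3]
      simp only [coeffL_zero]
      ring
    · intro _; rw [cF3, e2, e3]; simp only [coeffL_zero]; ring
    · intro n h1 h2
      rw [cF4, cF1, e1, e2, e3, e4]
      simp only [coeffL_zero]
      ring
    · intro _; rw [cF4, e1, e3, e4]; simp only [coeffL_zero]; ring
    · intro n h1 h2
      have : n = -3 ∨ n = -2 := by omega
      rcases this with rfl | rfl <;>
        · rw [cF5, cF0, e0, e5]
          simp only [coeffL_smul, coeffL_T]
          push_cast
          norm_num <;> ring
    · intro _
      rw [cF5, e0, e5]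
      simp only [coeffL_smul, coeffL_T]
      push_cast
      norm_num
      ring
  · -- w ∉ B
    rw [mem_B_iff]
    intro hC
    have h := hC.1 (-1) (by omega) (by norm_num)
    rw [e0, coeffL_T] at h
    norm_num at h
  · -- invariants spanned by w
    intro z hEz hFz
    rw [mem_B_iff] at hEz hFz
    obtain ⟨hE1, hE2, hE3', hE4, hE5, hE6, hE7, hE8, hE9⟩ := hEz
    obtain ⟨hF1, hF2, hF3', hF4, hF5, hF6, hF7, hF8, hF9⟩ := hFz
    -- bulk vanishing for z 1
    have g1 : ∀ m : ℤ, 2 - k3 ≤ m → m ≤ -1 → coeffL (z 1) m = 0 := by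
      intro m hm1 hm2
      have h := hE2 (m-1) (by omega) (by omega)
      rw [cE1, show m - 1 + 1 = m from by ring] at h
      exact int_mul_eq_zero (by omega) h
    -- bulk vanishing for z 2
    have g2 : ∀ m : ℤ, 1 - k3 ≤ m → m ≤ -2 → coeffL (z 2) m = 0 := by
      intro m hm1 hm2
      have h := hF3' (m+1) (by omega) (by omega)
      rw [cF2, show m + 1 - 1 = m from by ring] at h
      exact int_mul_eq_zero (by omega) h
    have Z1 : ∀ m : ℤ, 1 - k3 ≤ m → m ≤ -1 → coeffL (z 1) m = 0 := by
      intro m hm1 hm2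
      by_cases hm : 2 - k3 ≤ m
      · exact g1 m hm hm2
      · have hmeq : m = 1 - k3 := by omega
        have hk2 : 2 ≤ k3 := by omega
        subst hmeq
        have h := hE3' (1-k3) (by omega) (by omega)
        rw [cE2] at h
        by_cases hc : k3 = 2
        · rw [hc] at h ⊢
          rw [show (1 - (2:ℤ) + 1 : ℤ) = 0 from by norm_num,
            show (1 - (2:ℤ) : ℤ) = -1 from by norm_num] at h
          rw [show (1 - (2:ℤ) : ℤ) = -1 from by norm_num]
          push_cast at h
          linear_combination h
        · have hk4 : 4 ≤ k3 := by omega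
          rw [show (1 - k3 + 1 : ℤ) = 2 - k3 from by ring,
            g2 (2-k3) (by omega) (by omega)] at h
          push_cast at h
          linear_combination h
    have Z2 : ∀ m : ℤ, 1 - k3 ≤ m → m ≤ -1 → coeffL (z 2) m = 0 := by
      intro m hm1 hm2
      by_cases hm : m ≤ -2
      · exact g2 m hm1 hm
      · have hmeq : m = -1 := by omega
        have hk2 : 2 ≤ k3 := by omega
        subst hmeq
        have h := hF2 (-1) (by omega) (by norm_num)
        rw [cF1, show (-1 : ℤ) - 1 = -2 from by norm_num] at h
        by_cases hc : k3 = 2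
        · rw [hc] at h
          push_cast at h
          linear_combination h
        · have hk4 : 4 ≤ k3 := by omega
          rw [g1 (-2) (by omega) (by norm_num)] at h
          push_cast at h
          linear_combination h
    have g5 : ∀ m : ℤ, -k3 ≤ m → m ≤ -1 → coeffL (z 4) m = 0 := by
      intro m hm1 hm2
      have h := hE6 (m-1) (by omega) (by omega)
      rw [cE4, cE1, show m - 1 + 1 = m from by ring] at h
      have hz : ((m+1 : ℤ) : ℂ) * coeffL (z 1) (m+1) = 0 := by
        by_cases hm : m = -1
        · rw [hm]; norm_num
        · rw [Z1 (m+1) (by omega) (by omega), mul_zero]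
      rw [hz, mul_zero] at h
      exact int_mul_eq_zero (by omega) h
    have g8 : 2 ≤ k3 → coeffL (z 3) (-2) = 0 := by
      intro hk2
      have h := hF5 (Or.inl (by omega))
      rw [cF3, show (2 + k3 + (-1) - 1 : ℤ) = k3 from by ring,
        show (-1 : ℤ) - 1 = -2 from by norm_num, Z2 (-1) (by omega) (by norm_num)] at h
      have h2 : ((k3 : ℤ) : ℂ) * coeffL (z 3) (-2) = 0 := by
        push_cast at h ⊢
        linear_combination -h
      exact int_mul_eq_zero (by omega) h2
    have g6 : 2 ≤ k3 → coeffL (z 3) (-1) = 0 := by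
      intro hk2
      have h := hE4 (-2) (by omega) (by norm_num)
      rw [cE3, cE2, show (-2 : ℤ) + 1 = -1 from by norm_num,
        show (-1 : ℤ) + 1 = 0 from by norm_num,
        g5 (-2) (by omega) (by norm_num), Z1 (-1) (by omega) (by norm_num)] at h
      push_cast at h
      linear_combination -h
    have g7 : ∀ m : ℤ, -1 - k3 ≤ m → m ≤ -3 → coeffL (z 3) m = 2 * coeffL (z 2) (m+1) := by
      intro m hm1 hm2
      have h := hF4 (m+1) (by omega) (by omega)
      rw [cF3, cF2, show m + 1 - 1 = m from by ring,
        show m + 1 + 1 - 1 = m + 1 from by ring] at h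
      have h2 : ((k3 + m + 2 : ℤ) : ℂ) * (coeffL (z 3) m - 2 * coeffL (z 2) (m+1)) = 0 := by
        push_cast at h ⊢
        linear_combination -h
      have h3 := (mul_eq_zero.mp h2).resolve_left (Int.cast_ne_zero.mpr (by omega))
      linear_combination h3
    have g9 : 2 ≤ k3 → coeffL (z 4) (-1-k3) = -2 * coeffL (z 1) (-k3) := by
      intro hk2
      have h := hF6 (-k3) (by omega) (by omega)
      rw [cF4, cF1, show (-k3 : ℤ) - 1 = -1 - k3 from by ring,
        show (-k3 : ℤ) + 1 = 1 - k3 from by ring,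
        show (1 - k3 - 1 : ℤ) = -k3 from by ring] at h
      have hz3 : coeffL (z 3) (-k3) = 2 * coeffL (z 2) (1-k3) := by
        by_cases hc : k3 = 2
        · rw [hc, show (-(2:ℤ) : ℤ) = -2 from by norm_num,
            show (1 - (2:ℤ) : ℤ) = -1 from by norm_num, g8 (by omega),
            Z2 (-1) (by omega) (by norm_num)]
          ring
        · have hk4 : 4 ≤ k3 := by omega
          have hg := g7 (-k3) (by omega) (by omega)
          rwa [show (-k3 + 1 : ℤ) = 1 - k3 from by ring] at hg
      rw [hz3] at h
      push_cast at h
      linear_combination -h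
    have g10 : coeffL (z 5) (-2) = ((k3:ℂ)/2) * coeffL (z 0) (-1) := by
      have h := hE8 (-3) (by omega) (by norm_num)
      rw [cE5, cE0, show (-3 : ℤ) + 1 = -2 from by norm_num,
        show (-2 : ℤ) + 1 = -1 from by norm_num] at h
      push_cast at h
      linear_combination -h/2
    have g11 : coeffL (z 5) (-1) = 0 := by
      have h := hE8 (-2) (by omega) (by norm_num)
      rw [cE5, cE0, show (-2 : ℤ) + 1 = -1 from by norm_num,
        show (-1 : ℤ) + 1 = 0 from by norm_num] at h
      push_cast at h
      linear_combination -h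
    have g12 : coeffL (z 5) (-3) = (k3:ℂ) * coeffL (z 0) (-2) := by
      have h := hF8 (-2) (by omega) (by norm_num)
      rw [cF5, cF0, show (2 + 2 + (-2) - 1 : ℤ) = 1 from by ring,
        show (-2 : ℤ) - 1 = -3 from by norm_num,
        show (-2 : ℤ) + 1 = -1 from by norm_num,
        show (3 - 2 - 2 - (-1) : ℤ) = 0 from by ring] at h
      push_cast at h
      linear_combination -h
    refine ⟨coeffL (z 0) (-1), ?_⟩
    rw [mem_B_iff]
    refine ⟨?_, ?_, ?_, ?_, ?_, ?_, ?_, ?_, ?_⟩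
    · intro n h1 h2
      have hn : n = -1 := by omega
      subst hn
      rw [coeff_sub_smul, e0]
      simp only [coeffL_T]
      norm_num
    · intro n h1 h2
      rw [coeff_sub_smul, e1, coeffL_zero, Z1 n (by omega) (by omega)]
      ring
    · intro n h1 h2
      rw [coeff_sub_smul, e2, coeffL_zero, Z2 n (by omega) (by omega)]
      ring
    · intro n h1 h2
      have hk2 : 2 ≤ k3 := by omega
      rw [coeff_sub_smul, coeff_sub_smul, e3, e2]
      simp only [coeffL_zero]
      by_cases hn : n = -2
      · subst hn
        rw [g8 hk2, Z2 (-2+1) (by omega) (by norm_num)]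
        ring
      · rw [g7 n (by omega) (by omega)]
        ring
    · intro hant
      have hk2 : 2 ≤ k3 := by
        rcases hant with h | ⟨h, h'⟩
        · omega
        · omega
      rw [coeff_sub_smul, e3, coeffL_zero, g6 hk2]
      ring
    · intro n h1 h2
      have hk2 : 2 ≤ k3 := by omega
      rw [coeff_sub_smul, coeff_sub_smul, e4, e1]
      simp only [coeffL_zero]
      by_cases hn : n = -1 - k3
      · subst hn
        rw [show (-1 - k3 + 1 : ℤ) = -k3 from by ring, g9 hk2]
        ring
      · rw [g5 n (by omega) (by omega), Z1 (n+1) (by omega) (by omega)]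
        ring
    · intro hant
      have hk2 : 2 ≤ k3 := by
        rcases hant with h | ⟨h, h'⟩
        · omega
        · omega
      rw [coeff_sub_smul, e4, coeffL_zero, g5 (-1) (by omega) (by norm_num)]
      ring
    · intro n h1 h2
      have : n = -3 ∨ n = -2 := by omega
      rcases this with rfl | rfl
      · rw [coeff_sub_smul, coeff_sub_smul, e5, e0]
        simp only [coeffL_smul, coeffL_T]
        norm_num
        linear_combination g12
      · rw [coeff_sub_smul, coeff_sub_smul, e5, e0]
        simp only [coeffL_smul, coeffL_T]
        norm_num
        linear_combination g10
    · intro _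
      rw [coeff_sub_smul, e5]
      simp only [coeffL_smul, coeffL_T]
      norm_num
      exact g11

/-- In each of the four cases `(2,2,k₃)` with `k₃ ∉ {1,3}`, `(k,k,3−k)` with
`k ≠ 2`, `(k,k,5−k)` with `k ≠ 2`, and `(1,1,0)`, the 𝔰′-invariant part of
`H¹(ℂℙ¹, T₂)` is one-dimensional, spanned by the class of the given `w`. -/
theorem stmt_9 :
    (∀ k3 : ℤ, k3 ≠ 1 → k3 ≠ 3 →
      OneDimInv 2 2 k3 ![T (-1), 0, 0, 0, 0, ((k3 : ℂ) / 2) • T (-2)]) ∧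
    (∀ k : ℤ, k ≠ 2 →
      OneDimInv k k (3 - k) ![0, 0, 0, -T (-1), T (-2), 0]) ∧
    (∀ k : ℤ, k ≠ 2 →
      OneDimInv k k (5 - k)
        ![0, T (-2), T (-1), ((k : ℂ) / 3) • T (-2), -((2 * (k : ℂ) / 3) • T (-3)), 0]) ∧
    OneDimInv 1 1 0 ![0, 0, 0, 0, 0, T (-1)] := by
  exact ⟨fun k3 h1 h3 => case1 k3 h1 h3, fun k h => case2 k h, fun k h => case3 k h, case4⟩
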